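/- Let k and m be positive integers. The number of fillings Q of the hook diagram (k,1^m) by nonnegative even integers that are strictly increasing across the row, weakly increasing down the column, and satisfy Q(b') ≤ 2 and Q(b) ≤ Q(b') + 2k − 2 (where b is the last box of the row and b' is the last box of the column) is exactly 2 + km. -/
import Mathlib

namespace CardEvenHook

def qrow (k c : ℕ) : Fin k → ℕ := fun j => if (j : ℕ) < c then 2 * j else 2 * j + 2
def qcol (m t : ℕ) : Fin m → ℕ := fun i => if m ≤ (i : ℕ) + t then 2 else 0

lemma mem_cond {k m : ℕ} (hk : 0 < k) (hm : 0 < m) {c t : ℕ}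
    (hc : c ≤ k) (ht : t ≤ m) (h0 : t = 0 → c = k) (h1 : t < m → 0 < c) :
    (∀ j, 2 ∣ qrow k c j) ∧ (∀ i, 2 ∣ qcol m t i) ∧
      StrictMono (qrow k c) ∧ Monotone (qcol m t) ∧
      qrow k c ⟨0, hk⟩ ≤ qcol m t ⟨0, hm⟩ ∧
      qcol m t ⟨m - 1, Nat.sub_lt hm Nat.one_pos⟩ ≤ 2 ∧
      qrow k c ⟨k - 1, Nat.sub_lt hk Nat.one_pos⟩ ≤
        qcol m t ⟨m - 1, Nat.sub_lt hm Nat.one_pos⟩ + 2 * k - 2 := by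
  refine ⟨?_, ?_, ?_, ?_, ?_, ?_, ?_⟩
  · intro j; simp only [qrow]; split_ifs <;> omega
  · intro i; simp only [qcol]; split_ifs <;> omega
  · intro a b hab
    have h := Fin.lt_def.mp hab
    simp only [qrow]; split_ifs <;> omega
  · intro a b hab
    have h := Fin.le_def.mp hab
    simp only [qcol]; split_ifs <;> omega
  · simp only [qrow, qcol, Fin.val_mk]
    split_ifs with ha hb hb
    · omega
    · omega
    · omega
    · exact absurd (h1 (by omega)) (by omega)
  · simp only [qcol]; split_ifs <;> omega
  · simp only [qrow, qcol, Fin.val_mk]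
    split_ifs with ha hb hb
    · omega
    · have := h0 (by omega); omega
    · omega
    · have := h0 (by omega); omega

lemma qcol_inj {m t t' : ℕ} (hm : 0 < m) (ht : t ≤ m) (ht' : t' ≤ m)
    (h : qcol m t = qcol m t') : t = t' := by
  by_contra hne
  rcases Nat.lt_or_ge t t' with hlt | hge
  · have h1 := congrFun h ⟨m - t', by omega⟩
    simp only [qcol, Fin.val_mk] at h1
    split_ifs at h1 <;> omega
  · have hlt : t' < t := by omega
    have h1 := congrFun h ⟨m - t, by omega⟩
    simp only [qcol, Fin.val_mk] at h1
    split_ifs at h1 <;> omega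

lemma qrow_inj {k c c' : ℕ} (hc : c ≤ k) (hc' : c' ≤ k)
    (h : qrow k c = qrow k c') : c = c' := by
  by_contra hne
  rcases Nat.lt_or_ge c c' with hlt | hge
  · have h1 := congrFun h ⟨c, by omega⟩
    simp only [qrow, Fin.val_mk] at h1
    split_ifs at h1 <;> omega
  · have hlt : c' < c := by omega
    have h1 := congrFun h ⟨c', by omega⟩
    simp only [qrow, Fin.val_mk] at h1
    split_ifs at h1 <;> omega

/-- A `{0,2}`-valued monotone function on `Fin m` is a threshold function. -/
lemma col_threshold {m : ℕ} (g : Fin m → ℕ)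
    (hval : ∀ i, g i = 0 ∨ g i = 2) (hmo : Monotone g) :
    ∃ s, s ≤ m ∧ ∀ i : Fin m, g i = if (i : ℕ) < s then 0 else 2 := by
  classical
  have hex : ∃ s, s = m ∨ ∃ h : s < m, g ⟨s, h⟩ ≠ 0 := ⟨m, Or.inl rfl⟩
  refine ⟨Nat.find hex, Nat.find_le (Or.inl rfl), ?_⟩
  intro i
  by_cases hi : (i : ℕ) < Nat.find hex
  · have h := Nat.find_min hex hi
    push_neg at h
    have h2 := h.2 i.isLt
    simp only [Fin.eta] at h2
    simp [hi, h2]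
  · have hsm' : Nat.find hex < m := by have := i.isLt; omega
    have hQs : g ⟨Nat.find hex, hsm'⟩ ≠ 0 := by
      rcases Nat.find_spec hex with h | ⟨h', hne⟩
      · omega
      · exact hne
    have hQs2 : g ⟨Nat.find hex, hsm'⟩ = 2 := by
      rcases hval ⟨Nat.find hex, hsm'⟩ with h | h <;> omega
    have hle : g ⟨Nat.find hex, hsm'⟩ ≤ g i := by
      apply hmo
      rw [Fin.le_def]
      simp only [Fin.val_mk]
      omega
    rcases hval i with h | h
    · omega
    · simp [hi, h]

/-- A function on `Fin k` with `f j ∈ {2j, 2j+2}` such that `f j = 2j+2` propagates upward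
is given by a threshold `c`. -/
lemma row_threshold {k : ℕ} (f : Fin k → ℕ)
    (hval : ∀ j, f j = 2 * (j : ℕ) ∨ f j = 2 * (j : ℕ) + 2)
    (hprop : ∀ j j' : Fin k, (j : ℕ) ≤ (j' : ℕ) → f j = 2 * (j : ℕ) + 2 →
      f j' = 2 * (j' : ℕ) + 2) :
    ∃ c, c ≤ k ∧ ∀ j : Fin k, f j = if (j : ℕ) < c then 2 * (j : ℕ) else 2 * (j : ℕ) + 2 := by
  classical
  have hex : ∃ c, c = k ∨ ∃ h : c < k, f ⟨c, h⟩ ≠ 2 * c := ⟨k, Or.inl rfl⟩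
  refine ⟨Nat.find hex, Nat.find_le (Or.inl rfl), ?_⟩
  intro j
  by_cases hj : (j : ℕ) < Nat.find hex
  · have h := Nat.find_min hex hj
    push_neg at h
    have h2 := h.2 j.isLt
    simp only [Fin.eta] at h2
    simp [hj, h2]
  · have hck' : Nat.find hex < k := by have := j.isLt; omega
    have hQc : f ⟨Nat.find hex, hck'⟩ ≠ 2 * Nat.find hex := by
      rcases Nat.find_spec hex with h | ⟨h', hne⟩
      · omega
      · exact hne
    have hQc2 : f ⟨Nat.find hex, hck'⟩ = 2 * Nat.find hex + 2 := by
      have := hval ⟨Nat.find hex, hck'⟩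
      simp only [Fin.val_mk] at this
      omega
    have h3 := hprop ⟨Nat.find hex, hck'⟩ j (by simp only [Fin.val_mk]; omega) hQc2
    simp [hj, h3]

lemma exists_params {k m : ℕ} (hk : 0 < k) (hm : 0 < m)
    (Q : (Fin k → ℕ) × (Fin m → ℕ))
    (hd1 : ∀ j, 2 ∣ Q.1 j) (hd2 : ∀ i, 2 ∣ Q.2 i)
    (hs1 : StrictMono Q.1) (hmo : Monotone Q.2)
    (hcorner : Q.1 ⟨0, hk⟩ ≤ Q.2 ⟨0, hm⟩)
    (hb' : Q.2 ⟨m - 1, Nat.sub_lt hm Nat.one_pos⟩ ≤ 2)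
    (hb : Q.1 ⟨k - 1, Nat.sub_lt hk Nat.one_pos⟩ ≤
        Q.2 ⟨m - 1, Nat.sub_lt hm Nat.one_pos⟩ + 2 * k - 2) :
    ∃ t c, t ≤ m ∧ c ≤ k ∧ (t = 0 → c = k) ∧ (t < m → 0 < c) ∧
      Q.1 = qrow k c ∧ Q.2 = qcol m t := by
  -- all column entries are ≤ 2, hence 0 or 2
  have hcol2 : ∀ i : Fin m, Q.2 i ≤ 2 := by
    intro i
    refine le_trans (hmo ?_) hb'
    rw [Fin.le_def]
    have := i.isLt
    simp only [Fin.val_mk]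
    omega
  have hcolval : ∀ i : Fin m, Q.2 i = 0 ∨ Q.2 i = 2 := by
    intro i
    obtain ⟨a, ha⟩ := hd2 i
    have := hcol2 i
    omega
  -- growth of the row
  have hstep : ∀ d (i j : Fin k), (j : ℕ) = (i : ℕ) + d → Q.1 i + 2 * d ≤ Q.1 j := by
    intro d
    induction d with
    | zero =>
      intro i j hij
      have hji : j = i := Fin.ext (by omega)
      subst hji
      omega
    | succ n ih =>
      intro i j hij
      have hj' : (i : ℕ) + n < k := by have := j.isLt; omega
      have h1 := ih i ⟨(i : ℕ) + n, hj'⟩ rfl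
      have h2 : Q.1 ⟨(i : ℕ) + n, hj'⟩ < Q.1 j := by
        apply hs1
        rw [Fin.lt_def]
        simp only [Fin.val_mk]
        omega
      obtain ⟨a, ha⟩ := hd1 ⟨(i : ℕ) + n, hj'⟩
      obtain ⟨b, hb2⟩ := hd1 j
      omega
  have h10 : Q.1 ⟨0, hk⟩ ≤ 2 := le_trans hcorner (hcol2 ⟨0, hm⟩)
  have hrowb : ∀ j : Fin k, Q.1 j = 2 * (j : ℕ) ∨ Q.1 j = 2 * (j : ℕ) + 2 := by
    intro j
    have l1 := hstep j.val ⟨0, hk⟩ j (by simp)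
    have l2 := hstep (k - 1 - j.val) j ⟨k - 1, Nat.sub_lt hk Nat.one_pos⟩
      (by simp only [Fin.val_mk]; have := j.isLt; omega)
    obtain ⟨a, ha⟩ := hd1 j
    have := j.isLt
    omega
  obtain ⟨s, hsm, hcolchar⟩ := col_threshold Q.2 hcolval hmo
  obtain ⟨c, hck, hrowchar⟩ := row_threshold Q.1 hrowb (by
    intro j j' hjj hj2
    have l := hstep ((j' : ℕ) - (j : ℕ)) j j' (by omega)
    have := hrowb j'
    omega)
  refine ⟨m - s, c, by omega, hck, ?_, ?_, ?_, ?_⟩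
  · intro ht0
    have hsm2 : s = m := by omega
    by_contra hck2
    have hck' : c < k := by omega
    have h1 := hrowchar ⟨k - 1, Nat.sub_lt hk Nat.one_pos⟩
    have h2 := hcolchar ⟨m - 1, Nat.sub_lt hm Nat.one_pos⟩
    simp only [Fin.val_mk] at h1 h2
    rw [if_neg (by omega)] at h1
    rw [if_pos (by omega)] at h2
    omega
  · intro htm
    have hs0 : 0 < s := by omega
    have h0 := hcolchar ⟨0, hm⟩
    simp only [Fin.val_mk] at h0
    rw [if_pos hs0] at h0
    by_contra hc0
    have h1 := hrowchar ⟨0, hk⟩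
    simp only [Fin.val_mk] at h1
    rw [if_neg (by omega)] at h1
    omega
  · funext j
    rw [hrowchar j]
    rfl
  · funext i
    rw [hcolchar i]
    simp only [qcol]
    have := i.isLt
    split_ifs <;> omega


end CardEvenHook

open CardEvenHook

/-- The number of fillings `Q` of the hook diagram `(k,1^m)` by nonnegative even integers
which are strictly increasing across the row, weakly increasing down the column (the column
includes the corner box, which is the first row entry), and satisfy `Q(b') ≤ 2` and
`Q(b) ≤ Q(b') + 2k − 2` (where `b = (1,k)` is the last box of the row and `b' = (m+1,1)` is
the last box of the column), is exactly `2 + km`.  Here a filling is encoded as a pair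
`(Q.1, Q.2)` with `Q.1 j = Q(1, j+1)` the row entries and `Q.2 i = Q(i+2, 1)` the column
entries below the corner. -/
theorem card_even_hook_fillings (k m : ℕ) (hk : 0 < k) (hm : 0 < m) :
    Nat.card {Q : (Fin k → ℕ) × (Fin m → ℕ) //
      (∀ j, 2 ∣ Q.1 j) ∧ (∀ i, 2 ∣ Q.2 i) ∧
      StrictMono Q.1 ∧ Monotone Q.2 ∧
      Q.1 ⟨0, hk⟩ ≤ Q.2 ⟨0, hm⟩ ∧
      Q.2 ⟨m - 1, Nat.sub_lt hm Nat.one_pos⟩ ≤ 2 ∧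
      Q.1 ⟨k - 1, Nat.sub_lt hk Nat.one_pos⟩ ≤
        Q.2 ⟨m - 1, Nat.sub_lt hm Nat.one_pos⟩ + 2 * k - 2} = 2 + k * m := by
  classical
  let f : Unit ⊕ Fin (k + 1) ⊕ (Fin (m - 1) × Fin k) →
      {Q : (Fin k → ℕ) × (Fin m → ℕ) //
      (∀ j, 2 ∣ Q.1 j) ∧ (∀ i, 2 ∣ Q.2 i) ∧
      StrictMono Q.1 ∧ Monotone Q.2 ∧
      Q.1 ⟨0, hk⟩ ≤ Q.2 ⟨0, hm⟩ ∧
      Q.2 ⟨m - 1, Nat.sub_lt hm Nat.one_pos⟩ ≤ 2 ∧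
      Q.1 ⟨k - 1, Nat.sub_lt hk Nat.one_pos⟩ ≤
        Q.2 ⟨m - 1, Nat.sub_lt hm Nat.one_pos⟩ + 2 * k - 2} := fun x =>
    match x with
    | .inl _ => ⟨(qrow k k, qcol m 0),
        mem_cond hk hm le_rfl (by omega) (fun _ => rfl) (fun _ => hk)⟩
    | .inr (.inl c) => ⟨(qrow k c.val, qcol m m),
        mem_cond hk hm (by have := c.isLt; omega) le_rfl (by omega) (by omega)⟩
    | .inr (.inr (t, c)) => ⟨(qrow k (c.val + 1), qcol m (t.val + 1)),
        mem_cond hk hm (by have := c.isLt; omega) (by have := t.isLt; omega)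
          (by omega) (by omega)⟩
  have hf : Function.Bijective f := by
    constructor
    · rintro (x | cx | ⟨tx, cx⟩) (y | cy | ⟨ty, cy⟩) hxy <;>
        simp only [f, Subtype.mk.injEq, Prod.mk.injEq] at hxy
      · rfl
      · exact absurd (qcol_inj hm (by omega) le_rfl hxy.2) (by omega)
      · have := qcol_inj hm (by omega) (by have := ty.isLt; omega) hxy.2
        omega
      · exact absurd (qcol_inj hm le_rfl (by omega) hxy.2) (by omega)
      · have := qrow_inj (by have := cx.isLt; omega) (by have := cy.isLt; omega) hxy.1
        simp only [Sum.inr.injEq, Sum.inl.injEq, Fin.ext_iff]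
        omega
      · have := qcol_inj hm le_rfl (by have := ty.isLt; omega) hxy.2
        have := ty.isLt
        omega
      · have := qcol_inj hm (by have := tx.isLt; omega) (by omega) hxy.2
        omega
      · have := qcol_inj hm (by have := tx.isLt; omega) le_rfl hxy.2
        have := tx.isLt
        omega
      · have h1 := qcol_inj hm (by have := tx.isLt; omega) (by have := ty.isLt; omega) hxy.2
        have h2 := qrow_inj (by have := cx.isLt; omega) (by have := cy.isLt; omega) hxy.1
        simp only [Sum.inr.injEq, Prod.mk.injEq, Fin.ext_iff]
        omega
    · rintro ⟨Q, hQ⟩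
      obtain ⟨h1, h2, h3, h4, h5, h6, h7⟩ := hQ
      obtain ⟨t, c, htm, hck, h0, hpos, hrow, hcol⟩ :=
        exists_params hk hm Q h1 h2 h3 h4 h5 h6 h7
      by_cases ht0 : t = 0
      · refine ⟨Sum.inl (), Subtype.ext ?_⟩
        have hc : c = k := h0 ht0
        subst hc; subst ht0
        exact Prod.ext_iff.mpr ⟨hrow.symm, hcol.symm⟩
      · by_cases htm' : t = m
        · refine ⟨Sum.inr (Sum.inl ⟨c, by omega⟩), Subtype.ext ?_⟩
          subst htm'
          exact Prod.ext_iff.mpr ⟨hrow.symm, hcol.symm⟩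
        · have hc1 : 1 ≤ c := hpos (by omega)
          refine ⟨Sum.inr (Sum.inr (⟨t - 1, by omega⟩, ⟨c - 1, by omega⟩)), Subtype.ext ?_⟩
          show (qrow k ((c - 1) + 1), qcol m ((t - 1) + 1)) = Q
          rw [show (c - 1) + 1 = c by omega, show (t - 1) + 1 = t by omega]
          exact Prod.ext_iff.mpr ⟨hrow.symm, hcol.symm⟩
  have key := Nat.card_eq_of_bijective f hf
  rw [← key]
  obtain ⟨n, rfl⟩ : ∃ n, m = n + 1 := ⟨m - 1, by omega⟩
  simp only [Nat.card_eq_fintype_card, Fintype.card_sum, Fintype.card_prod,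
    Fintype.card_fin, Fintype.card_unit, Nat.add_sub_cancel]
  ring
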